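/- Suppose |V| = |R × S| and the linear map K_1 : ℂ^V → ℂ^{R×S} is invertible, and set C_p = min_{‖η‖_{ℓ^p} = 1} ‖K_1 η‖_{ℓ^p}. Then for every η ∈ ℂ^V with ‖η‖_{ℓ^p} < 1/μ_p, the sum of the forward Born series satisfies the lower bound ‖Σ_{j=1}^∞ K_j(η, …, η)‖_{ℓ^p} ≥ C_p ‖η‖_{ℓ^p} − ν_p μ_p ‖η‖_{ℓ^p}^2 / (1 − μ_p ‖η‖_{ℓ^p}). -/

import Mathlib

open scoped ENNReal

/-- The ℓ^p norm of a finitely indexed family, `p ∈ [1, ∞]`. -/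
noncomputable def lpNorm (p : ℝ≥0∞) {ι E : Type*} [Fintype ι] [SeminormedAddCommGroup E]
    (f : ι → E) : ℝ :=
  if p = ∞ then ⨆ i, ‖f i‖ else (∑ i, ‖f i‖ ^ p.toReal) ^ (1 / p.toReal)

section basic
variable {ι E : Type*} [Fintype ι] [SeminormedAddCommGroup E] {p : ℝ≥0∞}

lemma lpNorm_eq_norm (hp : 1 ≤ p) (f : ι → E) :
    lpNorm p f = ‖(WithLp.equiv p (∀ _ : ι, E)).symm f‖ := by
  haveI : Fact (1 ≤ p) := ⟨hp⟩
  unfold lpNorm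
  split_ifs with h
  · subst h
    exact (PiLp.norm_eq_ciSup _).symm
  · rw [PiLp.norm_eq_sum (ENNReal.toReal_pos (one_pos.trans_le hp).ne' h)]
    rfl

lemma lpNorm_nonneg (f : ι → E) : 0 ≤ lpNorm p f := by
  unfold lpNorm
  split_ifs with h
  · rcases isEmpty_or_nonempty ι with h' | h'
    · simp [ciSup_of_empty]
    · exact le_ciSup_of_le (Set.Finite.bddAbove (Set.finite_range _)) (Classical.arbitrary ι)
        (norm_nonneg _)
  · positivity

lemma lpNorm_smul {𝕜 : Type*} [NormedField 𝕜] [NormedSpace 𝕜 E] (hp : 1 ≤ p) (c : 𝕜)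
    (f : ι → E) : lpNorm p (c • f) = ‖c‖ * lpNorm p f := by
  haveI : Fact (1 ≤ p) := ⟨hp⟩
  rw [lpNorm_eq_norm hp, lpNorm_eq_norm hp, WithLp.equiv_symm_apply, WithLp.toLp_smul, norm_smul]

lemma lpNorm_mono {F : Type*} [SeminormedAddCommGroup F] (f : ι → E) (g : ι → F)
    (h : ∀ i, ‖f i‖ ≤ ‖g i‖) : lpNorm p f ≤ lpNorm p g := by
  unfold lpNorm
  split_ifs with hp
  · exact ciSup_mono (Set.Finite.bddAbove (Set.finite_range _)) h
  · refine Real.rpow_le_rpow (by positivity) (Finset.sum_le_sum fun i _ => ?_) (by positivity)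
    exact Real.rpow_le_rpow (norm_nonneg _) (h i) ENNReal.toReal_nonneg

lemma le_lpNorm (hp : 1 ≤ p) (f : ι → E) (i : ι) : ‖f i‖ ≤ lpNorm p f := by
  unfold lpNorm
  split_ifs with h
  · exact le_ciSup (f := fun i => ‖f i‖) (Set.Finite.bddAbove (Set.finite_range _)) i
  · have ht : 0 < p.toReal := ENNReal.toReal_pos (one_pos.trans_le hp).ne' h
    calc ‖f i‖ = (‖f i‖ ^ p.toReal) ^ (1 / p.toReal) := by
          rw [one_div, Real.rpow_rpow_inv (norm_nonneg _) ht.ne']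
      _ ≤ (∑ j, ‖f j‖ ^ p.toReal) ^ (1 / p.toReal) := by
          refine Real.rpow_le_rpow (by positivity) ?_ (by positivity)
          exact Finset.single_le_sum (f := fun j => ‖f j‖ ^ p.toReal)
            (fun j _ => by positivity) (Finset.mem_univ i)

end basic
section holder
variable {ι : Type*} [Fintype ι] {p q : ℝ≥0∞}

lemma conj_cases (hp : 1 ≤ p) (hq : 1 ≤ q) (hpq : 1 / p + 1 / q = 1) :
    (p = 1 ∧ q = ∞) ∨ (p = ∞ ∧ q = 1) ∨
      (p ≠ ∞ ∧ q ≠ ∞ ∧ Real.HolderConjugate p.toReal q.toReal) := by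
  by_cases hq' : q = ∞
  · subst hq'
    left
    simp only [one_div, ENNReal.inv_top, add_zero, ENNReal.inv_eq_one] at hpq
    exact ⟨hpq, rfl⟩
  by_cases hp' : p = ∞
  · subst hp'
    right; left
    simp only [one_div, ENNReal.inv_top, zero_add, ENNReal.inv_eq_one] at hpq
    exact ⟨rfl, hpq⟩
  right; right
  refine ⟨hp', hq', Real.holderConjugate_iff.mpr ⟨?_, ?_⟩⟩
  · rcases eq_or_lt_of_le hp with h1 | h1
    · exfalso
      rw [← h1] at hpq
      have h3 : (1:ℝ≥0∞)/1 = 1 := by simp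
      rw [h3] at hpq
      have : 1 / q = 0 :=
        (ENNReal.add_right_inj ENNReal.one_ne_top).mp (hpq.trans (add_zero 1).symm)
      rw [one_div, ENNReal.inv_eq_zero] at this
      exact hq' this
    · rw [show (1:ℝ) = (1:ℝ≥0∞).toReal by simp]
      exact (ENNReal.toReal_lt_toReal ENNReal.one_ne_top hp').mpr h1
  · have hp0 : p ≠ 0 := (one_pos.trans_le hp).ne'
    have hq0 : q ≠ 0 := (one_pos.trans_le hq).ne'
    have := congrArg ENNReal.toReal hpq
    rw [ENNReal.toReal_add (by simp [hp0]) (by simp [hq0])] at this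
    simpa [ENNReal.toReal_inv, one_div] using this

lemma holder_sum (hp : 1 ≤ p) (hq : 1 ≤ q) (hpq : 1 / p + 1 / q = 1) (f g : ι → ℂ) :
    ‖∑ v, f v * g v‖ ≤ lpNorm q f * lpNorm p g := by
  have step : ‖∑ v, f v * g v‖ ≤ ∑ v, ‖f v‖ * ‖g v‖ := by
    refine (norm_sum_le _ _).trans (le_of_eq ?_)
    simp [norm_mul]
  refine step.trans ?_
  rcases conj_cases hp hq hpq with ⟨hp1, hq1⟩ | ⟨hp1, hq1⟩ | ⟨hp1, hq1, hc⟩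
  · subst hp1; subst hq1
    calc ∑ v, ‖f v‖ * ‖g v‖ ≤ ∑ v, lpNorm ∞ f * ‖g v‖ := by
          refine Finset.sum_le_sum fun v _ => ?_
          exact mul_le_mul_of_nonneg_right (le_lpNorm le_top f v) (norm_nonneg _)
      _ = lpNorm ∞ f * ∑ v, ‖g v‖ := by rw [Finset.mul_sum]
      _ = lpNorm ∞ f * lpNorm 1 g := by
          unfold lpNorm
          norm_num
  · subst hp1; subst hq1
    calc ∑ v, ‖f v‖ * ‖g v‖ ≤ ∑ v, ‖f v‖ * lpNorm ∞ g := by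
          refine Finset.sum_le_sum fun v _ => ?_
          exact mul_le_mul_of_nonneg_left (le_lpNorm le_top g v) (norm_nonneg _)
      _ = lpNorm 1 f * lpNorm ∞ g := by
          unfold lpNorm
          norm_num [Finset.sum_mul]
  · have := Real.inner_le_Lp_mul_Lq (s := Finset.univ) (f := fun v => ‖f v‖) (g := fun v => ‖g v‖) hc.symm
    simp only [abs_norm] at this
    refine this.trans (le_of_eq ?_)
    unfold lpNorm
    simp [hp1, hq1]

end holder
section prodbound
variable {R S V : Type*} [Fintype R] [Fintype S] [Fintype V] {p : ℝ≥0∞}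

lemma lpNorm_le_of_bound [Nonempty R] [Nonempty S] (hp : 1 ≤ p) (K : R × S → ℂ) (c : ℝ)
    (a : R → ℝ) (b : S → ℝ) (hc : 0 ≤ c) (ha : ∀ r, 0 ≤ a r) (hb : ∀ s, 0 ≤ b s)
    (hK : ∀ rs : R × S, ‖K rs‖ ≤ c * a rs.1 * b rs.2) :
    lpNorm p K ≤ c * lpNorm p a * lpNorm p b := by
  have hna : 0 ≤ lpNorm p a := lpNorm_nonneg a
  have hnb : 0 ≤ lpNorm p b := lpNorm_nonneg b
  by_cases h : p = ∞
  · subst h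
    have : lpNorm ∞ K = ⨆ rs : R × S, ‖K rs‖ := by unfold lpNorm; simp
    rw [this]
    refine ciSup_le fun rs => (hK rs).trans ?_
    have h1 : a rs.1 ≤ lpNorm ∞ a := by
      have := le_lpNorm (p := ∞) le_top a rs.1
      rwa [Real.norm_of_nonneg (ha _)] at this
    have h2 : b rs.2 ≤ lpNorm ∞ b := by
      have := le_lpNorm (p := ∞) le_top b rs.2
      rwa [Real.norm_of_nonneg (hb _)] at this
    exact mul_le_mul (mul_le_mul_of_nonneg_left h1 hc) h2 (hb _) (by positivity)
  · have ht : 0 < p.toReal := ENNReal.toReal_pos (one_pos.trans_le hp).ne' h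
    set t := p.toReal
    unfold lpNorm
    simp only [h, if_false]
    calc (∑ rs : R × S, ‖K rs‖ ^ t) ^ (1 / t)
        ≤ (∑ rs : R × S, (c * a rs.1 * b rs.2) ^ t) ^ (1 / t) := by
          refine Real.rpow_le_rpow (by positivity) (Finset.sum_le_sum fun rs _ => ?_)
            (by positivity)
          exact Real.rpow_le_rpow (norm_nonneg _) (hK rs) ht.le
      _ = c * (∑ r, ‖a r‖ ^ t) ^ (1 / t) * (∑ s, ‖b s‖ ^ t) ^ (1 / t) := by
          have hsa : 0 ≤ ∑ r, a r ^ t := Finset.sum_nonneg fun r _ => Real.rpow_nonneg (ha r) t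
          have hsb : 0 ≤ ∑ s, b s ^ t := Finset.sum_nonneg fun s _ => Real.rpow_nonneg (hb s) t
          have expand : ∑ rs : R × S, (c * a rs.1 * b rs.2) ^ t
              = c ^ t * ((∑ r, a r ^ t) * (∑ s, b s ^ t)) := by
            rw [Fintype.sum_prod_type]
            have key : ∀ (r : R) (s : S), (c * a r * b s) ^ t = c ^ t * a r ^ t * b s ^ t := by
              intro r s
              rw [Real.mul_rpow (mul_nonneg hc (ha r)) (hb s), Real.mul_rpow hc (ha r)]
            simp_rw [key]
            calc ∑ r, ∑ s, c ^ t * a r ^ t * b s ^ t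
                = ∑ r, (c ^ t * a r ^ t) * ∑ s, b s ^ t := by
                  refine Finset.sum_congr rfl fun r _ => ?_
                  rw [← Finset.mul_sum]
              _ = c ^ t * ((∑ r, a r ^ t) * (∑ s, b s ^ t)) := by
                  rw [← Finset.sum_mul, ← Finset.mul_sum]
                  ring
          rw [expand]
          rw [Real.mul_rpow (Real.rpow_nonneg hc t) (mul_nonneg hsa hsb),
            Real.mul_rpow hsa hsb,
            one_div, Real.rpow_rpow_inv hc ht.ne']
          simp_rw [Real.norm_of_nonneg (ha _), Real.norm_of_nonneg (hb _)]
          ring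

lemma lpNorm_mul_le_of_bound (hp : 1 ≤ p) (η z : V → ℂ) (c : ℝ) (hc : 0 ≤ c)
    (hz : ∀ v, ‖z v‖ ≤ c) : lpNorm p (fun v => η v * z v) ≤ lpNorm p η * c := by
  calc lpNorm p (fun v => η v * z v) ≤ lpNorm p ((c : ℂ) • η) := by
        refine lpNorm_mono _ _ fun v => ?_
        calc ‖η v * z v‖ = ‖η v‖ * ‖z v‖ := norm_mul _ _
          _ ≤ ‖η v‖ * c := mul_le_mul_of_nonneg_left (hz v) (norm_nonneg _)
          _ = ‖((c : ℂ) • η) v‖ := by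
              simp only [Pi.smul_apply, smul_eq_mul, norm_mul, Complex.norm_real,
                Real.norm_of_nonneg hc]
              ring
    _ = lpNorm p η * c := by
        rw [lpNorm_smul hp, Complex.norm_real, Real.norm_of_nonneg hc, mul_comm]

end prodbound

variable {V R S : Type*} [Fintype V] [DecidableEq V] [Fintype R] [Fintype S]

/-- The multilinear forward Born operator: `bornK α0 B G C j` is `K_j`, mapping
`(η_1, …, η_j)` (given as the first `j` values of an `ℕ`-indexed family) to
`(r, s) ↦ (−α0)^j (B D_{η_1} G D_{η_2} G ⋯ G D_{η_j} C)(r, s)`; `K_0 := 0` is junk. -/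
noncomputable def bornK (α0 : ℝ) (B : Matrix R V ℂ) (G : Matrix V V ℂ) (C : Matrix V S ℂ) :
    ℕ → (ℕ → V → ℂ) → R × S → ℂ
  | 0, _ => 0
  | j + 1, η => fun rs =>
      (-(α0 : ℂ)) ^ (j + 1) *
        (B * Matrix.diagonal (η 0) *
          (List.ofFn fun i : Fin j => G * Matrix.diagonal (η (i.1 + 1))).prod * C) rs.1 rs.2

/-- `μ_p = α0 · max_{v ∈ V} ‖row v of G‖_{ℓ^q}` (this depends only on `q`). -/
noncomputable def muConst (α0 : ℝ) (q : ℝ≥0∞) (G : Matrix V V ℂ) : ℝ :=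
  α0 * ⨆ v : V, lpNorm q (G v)

/-- `ν_p = α0 · (Σ_{r ∈ R} ‖row r of B‖_q^p)^{1/p} · (Σ_{s ∈ S} ‖column s of C‖_q^p)^{1/p}`,
with maxima replacing sums when `p = ∞`. -/
noncomputable def nuConst (α0 : ℝ) (p q : ℝ≥0∞) (B : Matrix R V ℂ) (C : Matrix V S ℂ) : ℝ :=
  α0 * lpNorm p (fun r : R => lpNorm q (B r)) * lpNorm p (fun s : S => lpNorm q fun v => C v s)

/-- `C_p = min_{‖η‖_p = 1} ‖K_1 η‖_p`. -/
noncomputable def CpConst (p : ℝ≥0∞) (α0 : ℝ) (B : Matrix R V ℂ) (G : Matrix V V ℂ)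
    (C : Matrix V S ℂ) : ℝ :=
  sInf {t : ℝ | ∃ η : V → ℂ, lpNorm p η = 1 ∧ t = lpNorm p (bornK α0 B G C 1 fun _ => η)}

section born
variable {p q : ℝ≥0∞} {α0 : ℝ} {B : Matrix R V ℂ} {G : Matrix V V ℂ} {C : Matrix V S ℂ}

omit [Fintype R] [Fintype S] in
lemma bornK_succ_apply (j : ℕ) (η : V → ℂ) (rs : R × S) :
    bornK α0 B G C (j + 1) (fun _ => η) rs =
      (-(α0 : ℂ)) ^ (j + 1) *
        ∑ v, B rs.1 v * (η v * ((G * Matrix.diagonal η) ^ j * C) v rs.2) := by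
  show (-(α0 : ℂ)) ^ (j + 1) *
      (B * Matrix.diagonal η *
        (List.ofFn fun _ : Fin j => G * Matrix.diagonal η).prod * C) rs.1 rs.2 = _
  rw [List.ofFn_const, List.prod_replicate]
  congr 1
  rw [Matrix.mul_assoc (B * Matrix.diagonal η), Matrix.mul_apply]
  refine Finset.sum_congr rfl fun v _ => ?_
  rw [Matrix.mul_diagonal]
  ring

lemma bornK_one_smul (c : ℂ) (η : V → ℂ) :
    (bornK α0 B G C 1 fun _ => c • η) = c • (bornK α0 B G C 1 fun _ => η) := by
  funext rs
  rw [Pi.smul_apply, smul_eq_mul]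
  rw [show (1 : ℕ) = 0 + 1 from rfl, bornK_succ_apply, bornK_succ_apply]
  simp only [pow_zero, Matrix.one_mul, Pi.smul_apply, smul_eq_mul, Finset.mul_sum]
  exact Finset.sum_congr rfl fun v _ => by ring

lemma CpConst_mul_le (hp : 1 ≤ p) (η : V → ℂ) :
    CpConst p α0 B G C * lpNorm p η ≤ lpNorm p (bornK α0 B G C 1 fun _ => η) := by
  set N := lpNorm p η with hN
  have hN0 : 0 ≤ N := lpNorm_nonneg η
  rcases eq_or_lt_of_le hN0 with h0 | h0
  · rw [← h0, mul_zero]; exact lpNorm_nonneg _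
  · have bdd : BddBelow {t : ℝ | ∃ η : V → ℂ, lpNorm p η = 1 ∧
        t = lpNorm p (bornK α0 B G C 1 fun _ => η)} := by
      refine ⟨0, fun t ht => ?_⟩
      obtain ⟨η', -, rfl⟩ := ht
      exact lpNorm_nonneg _
    have hnorm : lpNorm p (((N : ℂ)⁻¹) • η) = 1 := by
      rw [lpNorm_smul hp, norm_inv, Complex.norm_real, Real.norm_of_nonneg hN0, ← hN]
      exact inv_mul_cancel₀ h0.ne'
    have mem : lpNorm p (bornK α0 B G C 1 fun _ => ((N : ℂ)⁻¹) • η) ∈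
        {t : ℝ | ∃ η : V → ℂ, lpNorm p η = 1 ∧
          t = lpNorm p (bornK α0 B G C 1 fun _ => η)} :=
      ⟨((N : ℂ)⁻¹) • η, hnorm, rfl⟩
    have hle := csInf_le bdd mem
    rw [bornK_one_smul, lpNorm_smul hp, norm_inv, Complex.norm_real,
      Real.norm_of_nonneg hN0] at hle
    calc CpConst p α0 B G C * N ≤ N⁻¹ * lpNorm p (bornK α0 B G C 1 fun _ => η) * N :=
          mul_le_mul_of_nonneg_right hle hN0
      _ = lpNorm p (bornK α0 B G C 1 fun _ => η) := by
          field_simp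

end born

set_option maxHeartbeats 2000000

/- STATEMENT 5: If `|V| = |R × S|`, `K_1` is invertible, and
`C_p = min_{‖η‖_p = 1} ‖K_1 η‖_p`, then for every `η` with `‖η‖_p < 1/μ_p`,
`‖Σ_{j=1}^∞ K_j(η, …, η)‖_p ≥ C_p ‖η‖_p − ν_p μ_p ‖η‖_p² / (1 − μ_p ‖η‖_p)`. -/
theorem forward_born_sum_lower_bound [Nonempty V] [Nonempty R] [Nonempty S]
    (p q : ℝ≥0∞) (hp : 1 ≤ p) (hq : 1 ≤ q) (hpq : 1 / p + 1 / q = 1)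
    (α0 : ℝ) (hα0 : 0 < α0) (B : Matrix R V ℂ) (G : Matrix V V ℂ) (C : Matrix V S ℂ)
    (hcard : Fintype.card V = Fintype.card (R × S))
    (hinv : Function.Bijective fun η : V → ℂ => bornK α0 B G C 1 fun _ => η)
    (η : V → ℂ) (hη : lpNorm p η < 1 / muConst α0 q G) :
    CpConst p α0 B G C * lpNorm p η -
        nuConst α0 p q B C * muConst α0 q G * lpNorm p η ^ 2 /
          (1 - muConst α0 q G * lpNorm p η) ≤
      lpNorm p (∑' j : ℕ, bornK α0 B G C (j + 1) fun _ => η) := by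
  haveI : Fact (1 ≤ p) := ⟨hp⟩
  set μ := muConst α0 q G with hμdef
  set N := lpNorm p η with hNdef
  have hN0 : 0 ≤ N := lpNorm_nonneg η
  set sG := ⨆ v : V, lpNorm q (G v) with hsGdef
  have hμsG : μ = α0 * sG := by rw [hμdef, hsGdef, muConst]
  have hsG0 : 0 ≤ sG :=
    le_ciSup_of_le (Set.Finite.bddAbove (Set.finite_range _)) (Classical.arbitrary V)
      (lpNorm_nonneg _)
  have hμ0 : 0 ≤ μ := by rw [hμsG]; exact mul_nonneg hα0.le hsG0
  have hμpos : 0 < μ := by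
    rcases eq_or_lt_of_le hμ0 with h0 | h0
    · exfalso
      rw [← h0] at hη
      simp only [div_zero] at hη
      exact absurd hη (not_lt.mpr hN0)
    · exact h0
  have ht1 : μ * N < 1 := by
    have h := mul_lt_mul_of_pos_left hη hμpos
    rwa [mul_one_div, div_self hμpos.ne'] at h
  set t := μ * N with htdef
  have ht0 : 0 ≤ t := mul_nonneg hμ0 hN0
  set aB := fun r : R => lpNorm q (B r) with haBdef
  set bC := fun s : S => lpNorm q (fun v => C v s) with hbCdef
  set ν := nuConst α0 p q B C with hνdef
  have hν : ν = α0 * lpNorm p aB * lpNorm p bC := rfl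
  have hν0 : 0 ≤ ν := by
    rw [hν]
    exact mul_nonneg (mul_nonneg hα0.le (lpNorm_nonneg _)) (lpNorm_nonneg _)
  have hGv : ∀ v, lpNorm q (G v) ≤ sG := fun v => by
    rw [hsGdef]
    exact le_ciSup (f := fun v => lpNorm q (G v)) (Set.Finite.bddAbove (Set.finite_range _)) v
  -- iterated bound on columns
  have z_bound : ∀ (j : ℕ) (v : V) (s : S),
      ‖((G * Matrix.diagonal η) ^ j * C) v s‖ ≤ (sG * N) ^ j * bC s := by
    intro j
    induction j with
    | zero =>
        intro v s
        simpa using le_lpNorm hq (fun u => C u s) v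
    | succ j ih =>
        intro v s
        have hzrec : ((G * Matrix.diagonal η) ^ (j + 1) * C) v s
            = ∑ u, G v u * (η u * ((G * Matrix.diagonal η) ^ j * C) u s) := by
          rw [pow_succ', Matrix.mul_assoc, Matrix.mul_apply]
          refine Finset.sum_congr rfl fun u _ => ?_
          rw [Matrix.mul_diagonal]
          ring
        rw [hzrec]
        have hcz : 0 ≤ (sG * N) ^ j * bC s :=
          mul_nonneg (pow_nonneg (mul_nonneg hsG0 hN0) j) (lpNorm_nonneg _)
        calc ‖∑ u, G v u * (η u * ((G * Matrix.diagonal η) ^ j * C) u s)‖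
            ≤ lpNorm q (G v) *
                lpNorm p (fun u => η u * ((G * Matrix.diagonal η) ^ j * C) u s) :=
              holder_sum hp hq hpq _ _
          _ ≤ sG * (N * ((sG * N) ^ j * bC s)) := by
              refine mul_le_mul (hGv v) ?_ (lpNorm_nonneg _) hsG0
              exact lpNorm_mul_le_of_bound hp η _ _ hcz (fun u => ih u s)
          _ = (sG * N) ^ (j + 1) * bC s := by ring
  -- lp bound on each Born term
  have term_bound : ∀ j : ℕ,
      lpNorm p (bornK α0 B G C (j + 1) fun _ => η) ≤ ν * N * t ^ j := by
    intro j
    have htj0 : 0 ≤ t ^ j := pow_nonneg ht0 j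
    have hc0 : 0 ≤ α0 * t ^ j * N := mul_nonneg (mul_nonneg hα0.le htj0) hN0
    have hK : ∀ rs : R × S, ‖bornK α0 B G C (j + 1) (fun _ => η) rs‖ ≤
        (α0 * t ^ j * N) * aB rs.1 * bC rs.2 := by
      intro rs
      rw [bornK_succ_apply, norm_mul]
      have hpow : ‖(-(α0 : ℂ)) ^ (j + 1)‖ = α0 ^ (j + 1) := by
        rw [norm_pow, norm_neg, Complex.norm_real, Real.norm_of_nonneg hα0.le]
      rw [hpow]
      have hcz : 0 ≤ (sG * N) ^ j * bC rs.2 :=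
        mul_nonneg (pow_nonneg (mul_nonneg hsG0 hN0) j) (lpNorm_nonneg _)
      calc α0 ^ (j + 1) * ‖∑ v, B rs.1 v * (η v * ((G * Matrix.diagonal η) ^ j * C) v rs.2)‖
          ≤ α0 ^ (j + 1) * (lpNorm q (B rs.1) *
              lpNorm p (fun v => η v * ((G * Matrix.diagonal η) ^ j * C) v rs.2)) :=
            mul_le_mul_of_nonneg_left (holder_sum hp hq hpq _ _) (by positivity)
        _ ≤ α0 ^ (j + 1) * (aB rs.1 * (N * ((sG * N) ^ j * bC rs.2))) := by
            refine mul_le_mul_of_nonneg_left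
              (mul_le_mul_of_nonneg_left ?_ (lpNorm_nonneg _)) (by positivity)
            exact lpNorm_mul_le_of_bound hp η _ _ hcz (fun v => z_bound j v rs.2)
        _ = (α0 * t ^ j * N) * aB rs.1 * bC rs.2 := by
            rw [htdef, hμsG]
            ring
    calc lpNorm p (bornK α0 B G C (j + 1) fun _ => η)
        ≤ (α0 * t ^ j * N) * lpNorm p aB * lpNorm p bC :=
          lpNorm_le_of_bound hp _ _ aB bC hc0 (fun r => lpNorm_nonneg _)
            (fun s => lpNorm_nonneg _) hK
      _ = ν * N * t ^ j := by rw [hν]; ring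
  -- summability
  set X : ℕ → PiLp p (fun _ : R × S => ℂ) :=
    fun j => (WithLp.equiv p (∀ _ : R × S, ℂ)).symm (bornK α0 B G C (j + 1) fun _ => η)
    with hXdef
  have hXnorm : ∀ j, ‖X j‖ = lpNorm p (bornK α0 B G C (j + 1) fun _ => η) := fun j =>
    (lpNorm_eq_norm hp _).symm
  have hb : Summable (fun j : ℕ => ν * N * t ^ j) :=
    (summable_geometric_of_lt_one ht0 ht1).mul_left _
  have hX : Summable X :=
    Summable.of_norm_bounded hb fun j => by rw [hXnorm]; exact term_bound j
  have hXtail : Summable fun j => X (j + 1) := by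
    exact (summable_nat_add_iff 1).mpr hX
  have hbtail : Summable fun j : ℕ => ν * N * t ^ (j + 1) := by
    exact (summable_nat_add_iff 1).mpr hb
  have hntail : Summable fun j => ‖X (j + 1)‖ :=
    Summable.of_nonneg_of_le (fun j => norm_nonneg _)
      (fun j => by rw [hXnorm]; exact term_bound (j + 1)) hbtail
  -- identify the tsum
  have hHS : HasSum (fun j : ℕ => bornK α0 B G C (j + 1) fun _ => η)
      ((WithLp.equiv p (∀ _ : R × S, ℂ)) (∑' j, X j)) :=
    (PiLp.continuousLinearEquiv p ℂ (fun _ : R × S => ℂ)).toContinuousLinearMap.hasSum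
      hX.hasSum
  rw [hHS.tsum_eq, lpNorm_eq_norm hp, Equiv.symm_apply_apply]
  -- final estimates
  have hsplit : ∑' j, X j = X 0 + ∑' j, X (j + 1) := hX.tsum_eq_zero_add
  have htail_norm : ‖∑' j, X (j + 1)‖ ≤ ν * N * t * (1 - t)⁻¹ := by
    calc ‖∑' j, X (j + 1)‖ ≤ ∑' j, ‖X (j + 1)‖ := norm_tsum_le_tsum_norm hntail
      _ ≤ ∑' j : ℕ, ν * N * t ^ (j + 1) :=
          Summable.tsum_le_tsum (fun j => by rw [hXnorm]; exact term_bound (j + 1)) hntail hbtail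
      _ = ν * N * t * (1 - t)⁻¹ := by
          rw [tsum_congr (fun j : ℕ => show ν * N * t ^ (j + 1) = (ν * N * t) * t ^ j by ring),
            tsum_mul_left, tsum_geometric_of_lt_one ht0 ht1]
  have hK1 : CpConst p α0 B G C * N ≤ ‖X 0‖ := by
    rw [hXnorm]
    exact CpConst_mul_le hp η
  have hX0 : ‖X 0‖ ≤ ‖∑' j, X j‖ + ‖∑' j, X (j + 1)‖ := by
    have hx0 : X 0 = (∑' j, X j) - ∑' j, X (j + 1) := by rw [hsplit]; abel
    rw [hx0]
    exact norm_sub_le _ _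
  have hfin : ν * μ * N ^ 2 / (1 - μ * N) = ν * N * t * (1 - t)⁻¹ := by
    rw [htdef, div_eq_mul_inv]
    ring
  linarith [hK1, hX0, htail_norm, hfin]
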